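/- arXiv:1208.4188 — 5 statements merged into one kernel-verified Lean document; each statement's English description precedes it below -/
import Mathlib

section
/- Hayashi–Nagaoka operator inequality: Let S and T be d×d complex matrices with 0 ≤ S ≤ I and T positive semidefinite, and suppose that S + T is positive definite. Let (S+T)^{−1/2} denote the inverse of the unique positive definite square root of S + T. Then I − (S+T)^{−1/2} S (S+T)^{−1/2} ≤ 2(I − S) + 4T. -/
open scoped ComplexOrder
open Matrix

/-- If `A, B` are positive semidefinite and `A^2 ≤ B^2`, then `A ≤ B`. -/
lemma psd_sub_of_sq_le_sq {n : ℕ} {A B : Matrix (Fin n) (Fin n) ℂ}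
    (hA : A.PosSemidef) (hB : B.PosSemidef)
    (h : (B * B - A * A).PosSemidef) : (B - A).PosSemidef := by
  have hC : (B - A).IsHermitian := hB.1.sub hA.1
  apply hC.posSemidef_iff_eigenvalues_nonneg.mpr
  intro i
  by_contra hneg
  push_neg at hneg
  set l : ℝ := hC.eigenvalues i with hl
  set v : Fin n → ℂ := ⇑(hC.eigenvectorBasis i : EuclideanSpace ℂ (Fin n)) with hv
  have hv0 : v ≠ 0 := fun h0 =>
    hC.eigenvectorBasis.orthonormal.ne_zero i ((WithLp.ofLp_eq_zero 2).mp h0)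
  have hEig : (B - A) *ᵥ v = l • v := hC.mulVec_eigenvectorBasis i
  have hBv : B *ᵥ v = A *ᵥ v + l • v := by
    rw [← hEig, sub_mulVec]; abel
  have key : ∀ (M : Matrix (Fin n) (Fin n) ℂ), M.IsHermitian → ∀ w,
      star (M *ᵥ v) ⬝ᵥ w = star v ⬝ᵥ (M *ᵥ w) := by
    intro M hM w
    rw [dotProduct_mulVec, star_mulVec, hM.eq]
  set na : ℂ := star v ⬝ᵥ (A *ᵥ v) with hna
  set nn : ℂ := star v ⬝ᵥ v with hnn
  have hstarl : ∀ w : Fin n → ℂ, star (l • w) = l • star w := by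
    intro w; ext j; simp
  have hsmul : ∀ (w u : Fin n → ℂ), (l • w) ⬝ᵥ u = (l : ℂ) * (w ⬝ᵥ u) := by
    intro w u
    simp only [dotProduct, Pi.smul_apply, Complex.real_smul, Finset.mul_sum]
    exact Finset.sum_congr rfl fun x _ => by ring
  have hsmul' : ∀ (w u : Fin n → ℂ), w ⬝ᵥ (l • u) = (l : ℂ) * (w ⬝ᵥ u) := by
    intro w u
    simp only [dotProduct, Pi.smul_apply, Complex.real_smul, Finset.mul_sum]
    exact Finset.sum_congr rfl fun x _ => by ring
  have e2 : star (B *ᵥ v) ⬝ᵥ (B *ᵥ v)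
      = star (A *ᵥ v) ⬝ᵥ (A *ᵥ v) + (l : ℂ) * na + (l : ℂ) * na + (l : ℂ)^2 * nn := by
    rw [hBv, star_add, hstarl, add_dotProduct, dotProduct_add, dotProduct_add, hsmul, hsmul,
      hsmul', hsmul', key A hA.1 v]
    ring
  have e1 : star v ⬝ᵥ ((B * B - A * A) *ᵥ v)
      = (l : ℂ) * na + (l : ℂ) * na + (l : ℂ)^2 * nn := by
    rw [sub_mulVec, dotProduct_sub, ← mulVec_mulVec, ← mulVec_mulVec,
      ← key B hB.1, ← key A hA.1, e2]
    ring
  have h1 : (0 : ℂ) ≤ (l : ℂ) * na + (l : ℂ) * na + (l : ℂ)^2 * nn := e1 ▸ h.dotProduct_mulVec_nonneg v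
  have h2 : (0 : ℂ) ≤ na := hA.dotProduct_mulVec_nonneg v
  have h3 : (0 : ℂ) ≤ na + (l : ℂ) * nn := by
    have := hB.dotProduct_mulVec_nonneg v
    rwa [hBv, dotProduct_add, hsmul', ← hna, ← hnn] at this
  have h4 : (0 : ℂ) < nn := Matrix.dotProduct_star_self_pos_iff.mpr hv0
  have hna_im : na.im = 0 := by
    have := (Complex.le_def.mp h2).2; simpa using this.symm
  have hnn_im : nn.im = 0 := by
    have := (Complex.le_def.mp h4.le).2; simpa using this.symm
  have r1 : (0:ℝ) ≤ l * na.re + l * na.re + l^2 * nn.re := by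
    have := (Complex.le_def.mp h1).1
    simpa [Complex.add_re, Complex.mul_re, hna_im, hnn_im, pow_two] using this
  have r2 : (0:ℝ) ≤ na.re := (Complex.le_def.mp h2).1
  have r3 : (0:ℝ) ≤ na.re + l * nn.re := by
    have := (Complex.le_def.mp h3).1
    simpa [Complex.add_re, Complex.mul_re, hnn_im] using this
  have r4 : (0:ℝ) < nn.re := by
    have := (Complex.lt_def.mp h4).1; simpa using this
  nlinarith [mul_pos (mul_pos (neg_pos.mpr hneg) (neg_pos.mpr hneg)) r4,
    mul_nonneg (le_of_lt (neg_pos.mpr hneg)) r3]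

/-- The positive semidefinite square root of a positive semidefinite matrix, as defined in
Mathlib (December 2024), where it has since been removed. -/
noncomputable def Matrix.PosSemidef.sqrt {n 𝕜 : Type*} [Fintype n] [DecidableEq n] [RCLike 𝕜]
    {A : Matrix n n 𝕜} (hA : A.PosSemidef) : Matrix n n 𝕜 :=
  hA.1.eigenvectorUnitary.1 * Matrix.diagonal ((↑) ∘ (√·) ∘ hA.1.eigenvalues) *
    (star hA.1.eigenvectorUnitary : Matrix n n 𝕜)

lemma Matrix.PosSemidef.posSemidef_sqrt {n 𝕜 : Type*} [Fintype n] [DecidableEq n] [RCLike 𝕜]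
    {A : Matrix n n 𝕜} (hA : A.PosSemidef) : hA.sqrt.PosSemidef := by
  unfold Matrix.PosSemidef.sqrt
  have hd : (Matrix.diagonal ((↑) ∘ (√·) ∘ hA.1.eigenvalues) : Matrix n n 𝕜).PosSemidef := by
    rw [posSemidef_diagonal_iff]
    intro i
    simp [Real.sqrt_nonneg]
  simpa [star_eq_conjTranspose] using
    hd.mul_mul_conjTranspose_same (hA.1.eigenvectorUnitary : Matrix n n 𝕜)

lemma Matrix.PosSemidef.sqrt_mul_self {n 𝕜 : Type*} [Fintype n] [DecidableEq n] [RCLike 𝕜]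
    {A : Matrix n n 𝕜} (hA : A.PosSemidef) : hA.sqrt * hA.sqrt = A := by
  unfold Matrix.PosSemidef.sqrt
  conv_rhs => rw [hA.1.spectral_theorem, Unitary.conjStarAlgAut_apply]
  have hU : (star hA.1.eigenvectorUnitary : Matrix n n 𝕜) * hA.1.eigenvectorUnitary = 1 :=
    Unitary.coe_star_mul_self _
  calc _ = (hA.1.eigenvectorUnitary : Matrix n n 𝕜) *
        (Matrix.diagonal ((↑) ∘ (√·) ∘ hA.1.eigenvalues) *
          ((star hA.1.eigenvectorUnitary : Matrix n n 𝕜) * (hA.1.eigenvectorUnitary : Matrix n n 𝕜)) *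
          Matrix.diagonal ((↑) ∘ (√·) ∘ hA.1.eigenvalues)) *
        (star hA.1.eigenvectorUnitary : Matrix n n 𝕜) := by simp only [mul_assoc]
    _ = _ := by
      rw [hU, mul_one, diagonal_mul_diagonal]
      congr 2
      congr 1
      ext i
      simp only [Function.comp_apply, ← RCLike.ofReal_mul,
        Real.mul_self_sqrt (hA.eigenvalues_nonneg i)]

/-- Hayashi–Nagaoka operator inequality: for `0 ≤ S ≤ I`, `T ≥ 0` with `S + T` positive
definite, `I − (S+T)^{−1/2} S (S+T)^{−1/2} ≤ 2(I − S) + 4T`, where `(S+T)^{−1/2}` is the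
inverse of the (unique) positive definite square root of `S + T`. -/
theorem hayashi_nagaoka {d : ℕ} (S T : Matrix (Fin d) (Fin d) ℂ)
    (hS0 : S.PosSemidef) (hS1 : ((1 : Matrix (Fin d) (Fin d) ℂ) - S).PosSemidef)
    (hT : T.PosSemidef) (hST : (S + T).PosDef) :
    ((2 : ℂ) • ((1 : Matrix (Fin d) (Fin d) ℂ) - S) + (4 : ℂ) • T -
        ((1 : Matrix (Fin d) (Fin d) ℂ) -
          (hST.posSemidef.sqrt)⁻¹ * S * (hST.posSemidef.sqrt)⁻¹)).PosSemidef := by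
  classical
  set P : Matrix (Fin d) (Fin d) ℂ := hST.posSemidef.sqrt with hPdef
  have hP : P.PosSemidef := hST.posSemidef.posSemidef_sqrt
  have hP2 : P * P = S + T := hST.posSemidef.sqrt_mul_self
  have hdet : IsUnit P.det := by
    have h1 : IsUnit (P.det * P.det) := by
      rw [← Matrix.det_mul, hP2]
      exact (Matrix.isUnit_iff_isUnit_det _).mp hST.isUnit
    exact isUnit_of_mul_isUnit_left h1
  have hPK : P * P⁻¹ = 1 := Matrix.mul_nonsing_inv P hdet
  have hKP : P⁻¹ * P = 1 := Matrix.nonsing_inv_mul P hdet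
  have hKH : (P⁻¹).IsHermitian := hP.1.inv
  -- S - S*S is PSD
  set Q : Matrix (Fin d) (Fin d) ℂ := hS0.sqrt with hQdef
  have hQ : Q.PosSemidef := hS0.posSemidef_sqrt
  have hQ2 : Q * Q = S := hS0.sqrt_mul_self
  have hSS : (S - S * S).PosSemidef := by
    have h1 := hS1.mul_mul_conjTranspose_same Q
    have h2 : Q * (1 - S) * Qᴴ = S - S * S := by
      rw [hQ.1.eq, ← hQ2]
      simp only [mul_sub, sub_mul, mul_one, one_mul, mul_assoc]
    rwa [h2] at h1
  have c0 : (P * P - S * S).PosSemidef := by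
    have h1 := hT.add hSS
    have h2 : T + (S - S * S) = P * P - S * S := by rw [hP2]; abel
    rwa [h2] at h1
  have cPS : (P - S).PosSemidef := psd_sub_of_sq_le_sq hS0 hP c0
  have hEH : ((1 : Matrix (Fin d) (Fin d) ℂ) - P⁻¹)ᴴ = 1 - P⁻¹ :=
    (Matrix.isHermitian_one.sub hKH)
  have hFH : ((1 : Matrix (Fin d) (Fin d) ℂ) + (1 - P⁻¹))ᴴ = 1 + (1 - P⁻¹) := by
    rw [Matrix.conjTranspose_add, hEH, Matrix.conjTranspose_one]
  have c2 : (((1 : Matrix (Fin d) (Fin d) ℂ) - P⁻¹) * S * (1 - P⁻¹)).PosSemidef := by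
    have := hS0.mul_mul_conjTranspose_same (1 - P⁻¹)
    rwa [hEH] at this
  have c3 : (((1 : Matrix (Fin d) (Fin d) ℂ) + (1 - P⁻¹)) * T * (1 + (1 - P⁻¹))).PosSemidef := by
    have := hT.mul_mul_conjTranspose_same (1 + (1 - P⁻¹))
    rwa [hFH] at this
  have main : (2 : ℂ) • ((1 : Matrix (Fin d) (Fin d) ℂ) - S) + (4 : ℂ) • T -
        ((1 : Matrix (Fin d) (Fin d) ℂ) - P⁻¹ * S * P⁻¹)
      = ((P - S) + (P - S) + (P - S) + (P - S))
        + (((1 : Matrix (Fin d) (Fin d) ℂ) - P⁻¹) * S * (1 - P⁻¹)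
            + ((1 : Matrix (Fin d) (Fin d) ℂ) - P⁻¹) * S * (1 - P⁻¹))
        + ((1 : Matrix (Fin d) (Fin d) ℂ) + (1 - P⁻¹)) * T * (1 + (1 - P⁻¹)) := by
    have hT' : T = P * P - S := by rw [hP2]; abel
    rw [hT']
    have k1 : ∀ X : Matrix (Fin d) (Fin d) ℂ, P⁻¹ * (P * X) = X := fun X => by
      rw [← mul_assoc, hKP, one_mul]
    have k2 : ∀ X : Matrix (Fin d) (Fin d) ℂ, P * (P⁻¹ * X) = X := fun X => by
      rw [← mul_assoc, hPK, one_mul]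
    simp only [mul_sub, sub_mul, mul_add, add_mul, mul_one, one_mul, smul_sub, smul_add,
      mul_assoc, hKP, hPK, k1, k2]
    module
  rw [main]
  exact (((((cPS.add cPS).add cPS).add cPS).add (c2.add c2)).add c3)
end

section
/- Probability that independent sequences are jointly typical: Let 𝒳, 𝒴 be finite sets and p a joint probability distribution on 𝒳×𝒴 with marginals p_X and p_Y. Fix n ∈ ℕ and δ > 0, and define the jointly typical set J^n_δ as the set of pairs (xⁿ, yⁿ) ∈ 𝒳ⁿ×𝒴ⁿ such that xⁿ ∈ T^n_δ(p_X), yⁿ ∈ T^n_δ(p_Y), and the paired sequence ((x₁,y₁),…,(xₙ,yₙ)) ∈ T^n_δ(p). Then ∑_{(xⁿ,yⁿ)∈J^n_δ} (∏ᵢ p_X(xᵢ)) (∏ᵢ p_Y(yᵢ)) ≤ 2^{−n(I(X;Y) − 3δ)}, where I(X;Y) := H(p_X) + H(p_Y) − H(p). -/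
open scoped BigOperators

/-- Shannon entropy (base 2) of a probability vector. -/
noncomputable def shannonH {α : Type*} [Fintype α] (p : α → ℝ) : ℝ :=
  ∑ a, -(p a * Real.logb 2 (p a))

/-- The entropy-typical set `T^n_δ(p)`. -/
def Typical {α : Type*} [Fintype α] (p : α → ℝ) (n : ℕ) (δ : ℝ) (x : Fin n → α) : Prop :=
  0 < ∏ i, p (x i) ∧
    |(-(1 / (n : ℝ)) * Real.logb 2 (∏ i, p (x i))) - shannonH p| ≤ δ


lemma typical_bounds {α : Type*} [Fintype α] {p : α → ℝ} {n : ℕ} {δ : ℝ} {x : Fin n → α}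
    (h : Typical p n δ x) :
    (2:ℝ) ^ (-(n:ℝ) * (shannonH p + δ)) ≤ ∏ i, p (x i) ∧
    ∏ i, p (x i) ≤ (2:ℝ) ^ (-(n:ℝ) * (shannonH p - δ)) := by
  obtain ⟨hP, habs⟩ := h
  set L := Real.logb 2 (∏ i, p (x i)) with hL
  have hkey : -(n:ℝ) * (shannonH p + δ) ≤ L ∧ L ≤ -(n:ℝ) * (shannonH p - δ) := by
    rcases Nat.eq_zero_or_pos n with hn | hn
    · subst hn
      have hone : (∏ i : Fin 0, p (x i)) = 1 := by simp
      rw [hL, hone]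
      simp
    · have hn' : (0:ℝ) < n := by exact_mod_cast hn
      have h2 := abs_le.mp habs
      have hA : (-(1/(n:ℝ))*L - shannonH p) * n ≤ δ * n :=
        mul_le_mul_of_nonneg_right h2.2 hn'.le
      have hB : -δ * n ≤ (-(1/(n:ℝ))*L - shannonH p) * n :=
        mul_le_mul_of_nonneg_right h2.1 hn'.le
      have e : (-(1/(n:ℝ))*L - shannonH p) * n = -L - shannonH p * n := by
        field_simp
      rw [e] at hA hB
      constructor <;> nlinarith
  have h2 : (∏ i, p (x i)) = (2:ℝ) ^ L := (Real.rpow_logb (by norm_num) (by norm_num) hP).symm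
  rw [h2]
  exact ⟨Real.rpow_le_rpow_of_exponent_le (by norm_num) hkey.1,
    Real.rpow_le_rpow_of_exponent_le (by norm_num) hkey.2⟩

open scoped Classical in
/-- The probability that two independent sequences (drawn from the marginals) are jointly
typical is at most `2^{−n(I(X;Y) − 3δ)}`. -/
theorem jointly_typical_probability {X Y : Type*} [Fintype X] [Fintype Y]
    (p : X × Y → ℝ) (hp : ∀ z, 0 ≤ p z) (hpsum : ∑ z, p z = 1)
    (n : ℕ) (δ : ℝ) (hδ : 0 < δ) :
    ∑ x : Fin n → X, ∑ y : Fin n → Y,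
      (if Typical (fun a => ∑ b, p (a, b)) n δ x ∧
          Typical (fun b => ∑ a, p (a, b)) n δ y ∧
          Typical p n δ (fun i => (x i, y i)) then
        (∏ i, ∑ b, p (x i, b)) * (∏ i, ∑ a, p (a, y i))
      else 0) ≤
      (2 : ℝ) ^ (-(n : ℝ) *
        ((shannonH (fun a => ∑ b, p (a, b)) + shannonH (fun b => ∑ a, p (a, b)) -
            shannonH p) - 3 * δ)) := by
  set pX : X → ℝ := fun a => ∑ b, p (a, b) with hpXdef
  set pY : Y → ℝ := fun b => ∑ a, p (a, b) with hpYdef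
  set R : ℝ := (2:ℝ) ^ (-(n:ℝ) * ((shannonH pX + shannonH pY - shannonH p) - 3*δ)) with hR
  have hR0 : (0:ℝ) ≤ R := (Real.rpow_pos_of_pos (by norm_num) _).le
  have hprodnn : ∀ (x : Fin n → X) (y : Fin n → Y), 0 ≤ ∏ i, p (x i, y i) := by
    intro x y; exact Finset.prod_nonneg fun i _ => hp _
  have key : ∀ (x : Fin n → X) (y : Fin n → Y),
      (if Typical pX n δ x ∧ Typical pY n δ y ∧ Typical p n δ (fun i => (x i, y i)) then
        (∏ i, ∑ b, p (x i, b)) * (∏ i, ∑ a, p (a, y i)) else 0)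
      ≤ R * (∏ i, p (x i, y i)) := by
    intro x y
    split_ifs with h
    · obtain ⟨hx, hy, hxy⟩ := h
      have b1 := (typical_bounds hx).2
      have b2 := (typical_bounds hy).2
      have b3 := (typical_bounds hxy).1
      have hnnX : (0:ℝ) ≤ ∏ i, pX (x i) := Finset.prod_nonneg fun i _ =>
        Finset.sum_nonneg fun b _ => hp _
      have hnnB : (0:ℝ) ≤ (2:ℝ) ^ (-(n:ℝ) * (shannonH pY - δ)) :=
        (Real.rpow_pos_of_pos (by norm_num) _).le
      have e : (2:ℝ) ^ (-(n:ℝ)*(shannonH pX - δ)) * (2:ℝ)^(-(n:ℝ)*(shannonH pY - δ))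
          = R * (2:ℝ)^(-(n:ℝ)*(shannonH p + δ)) := by
        rw [hR, ← Real.rpow_add (by norm_num), ← Real.rpow_add (by norm_num)]
        ring_nf
      calc (∏ i, ∑ b, p (x i, b)) * (∏ i, ∑ a, p (a, y i))
          = (∏ i, pX (x i)) * (∏ i, pY (y i)) := rfl
        _ ≤ (2:ℝ) ^ (-(n:ℝ)*(shannonH pX - δ)) * (2:ℝ)^(-(n:ℝ)*(shannonH pY - δ)) := by
            apply mul_le_mul b1 b2 (Finset.prod_nonneg fun i _ =>
              Finset.sum_nonneg fun a _ => hp _) ((Real.rpow_pos_of_pos (by norm_num) _).le)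
        _ = R * (2:ℝ)^(-(n:ℝ)*(shannonH p + δ)) := e
        _ ≤ R * (∏ i, p (x i, y i)) := by
            exact mul_le_mul_of_nonneg_left b3 hR0
    · exact mul_nonneg hR0 (hprodnn x y)
  have total : ∑ x : Fin n → X, ∑ y : Fin n → Y, ∏ i, p (x i, y i) = 1 := by
    have inner : ∀ x : Fin n → X,
        (∑ y : Fin n → Y, ∏ i, p (x i, y i)) = ∏ i, pX (x i) := by
      intro x
      rw [hpXdef]
      rw [show (∏ i, (fun a => ∑ b, p (a, b)) (x i)) = ∏ i, ∑ b ∈ Finset.univ, p (x i, b) from rfl]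
      rw [Finset.prod_univ_sum]
      rw [Fintype.piFinset_univ]
    rw [Finset.sum_congr rfl fun x _ => inner x]
    rw [show (∑ x : Fin n → X, ∏ i, pX (x i)) = ∑ x ∈ Fintype.piFinset (fun _ : Fin n => Finset.univ), ∏ i, pX (x i) by rw [Fintype.piFinset_univ]]
    rw [← Finset.prod_univ_sum]
    have hmarg : (∑ a, pX a) = 1 := by
      rw [hpXdef, ← hpsum, Fintype.sum_prod_type]
    simp [hmarg]
  calc ∑ x : Fin n → X, ∑ y : Fin n → Y,
      (if Typical pX n δ x ∧ Typical pY n δ y ∧ Typical p n δ (fun i => (x i, y i)) then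
        (∏ i, ∑ b, p (x i, b)) * (∏ i, ∑ a, p (a, y i)) else 0)
      ≤ ∑ x : Fin n → X, ∑ y : Fin n → Y, R * (∏ i, p (x i, y i)) := by
        apply Finset.sum_le_sum; intro x _
        apply Finset.sum_le_sum; intro y _
        exact key x y
    _ = R * ∑ x : Fin n → X, ∑ y : Fin n → Y, ∏ i, p (x i, y i) := by
        simp_rw [← Finset.mul_sum]
    _ = R := by rw [total, mul_one]
end

section
/- Classical conditional packing lemma (core expectation bound): Let 𝒰, 𝒳, 𝒴 be finite sets, p_U a probability distribution on 𝒰, p_{X|U} a conditional distribution, and w(y|x,u) a channel (a conditional distribution on 𝒴 for each (x,u)). Define w̄(y|u) := ∑_x p_{X|U}(x|u) w(y|x,u), the conditional entropies H(Y|X,U) := ∑_{u,x} p_U(u)p_{X|U}(x|u) H(w(·|x,u)) and H(Y|U) := ∑_u p_U(u) H(w̄(·|u)), and I(X;Y|U) := H(Y|U) − H(Y|X,U). Then for every n ∈ ℕ and δ > 0, ∑_{uⁿ∈𝒰ⁿ} ∑_{xⁿ∈𝒳ⁿ} ∑_{x̃ⁿ∈𝒳ⁿ} ∑_{ỹⁿ∈𝒴ⁿ}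 (∏ᵢ p_U(uᵢ)) (∏ᵢ p_{X|U}(xᵢ|uᵢ)) (∏ᵢ p_{X|U}(x̃ᵢ|uᵢ)) (∏ᵢ w(ỹᵢ|x̃ᵢ,uᵢ)) · 1[ỹⁿ ∈ T^n_δ(Y|xⁿ,uⁿ)] · 1[ỹⁿ ∈ T^n_δ(Y|uⁿ)] ≤ 2^{−n(I(X;Y|U) − 2δ)}. -/
open scoped BigOperators

section
variable {U X Y : Type*} [Fintype U] [Fintype X] [Fintype Y]

/-- The averaged channel `w̄(y|u) = ∑ₓ p_{X|U}(x|u) w(y|x,u)`. -/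
noncomputable def wbar (pXU : U → X → ℝ) (w : X → U → Y → ℝ) : U → Y → ℝ :=
  fun u y => ∑ x, pXU u x * w x u y

/-- The conditional entropy `H(Y|X,U)`. -/
noncomputable def HYXU (pU : U → ℝ) (pXU : U → X → ℝ) (w : X → U → Y → ℝ) : ℝ :=
  ∑ u, ∑ x, pU u * pXU u x * shannonH (w x u)

/-- The conditional entropy `H(Y|U)` of the averaged channel. -/
noncomputable def HYU (pU : U → ℝ) (pXU : U → X → ℝ) (w : X → U → Y → ℝ) : ℝ :=
  ∑ u, pU u * shannonH (wbar pXU w u)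

/-- `yₙ ∈ T^n_δ(Y|xₙ,uₙ)`, the conditionally typical set for the channel `w`. -/
def CondTypicalXU (pU : U → ℝ) (pXU : U → X → ℝ) (w : X → U → Y → ℝ) (n : ℕ) (δ : ℝ)
    (xₙ : Fin n → X) (uₙ : Fin n → U) (yₙ : Fin n → Y) : Prop :=
  0 < ∏ i, w (xₙ i) (uₙ i) (yₙ i) ∧
    |(-(1 / (n : ℝ)) * Real.logb 2 (∏ i, w (xₙ i) (uₙ i) (yₙ i))) - HYXU pU pXU w| ≤ δ

/-- `yₙ ∈ T^n_δ(Y|uₙ)`, the conditionally typical set for the averaged channel `w̄`. -/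
def CondTypicalU (pU : U → ℝ) (pXU : U → X → ℝ) (w : X → U → Y → ℝ) (n : ℕ) (δ : ℝ)
    (uₙ : Fin n → U) (yₙ : Fin n → Y) : Prop :=
  0 < ∏ i, wbar pXU w (uₙ i) (yₙ i) ∧
    |(-(1 / (n : ℝ)) * Real.logb 2 (∏ i, wbar pXU w (uₙ i) (yₙ i))) - HYU pU pXU w| ≤ δ

lemma prod_sum_eq (n : ℕ) {α : Type*} [Fintype α] (g : Fin n → α → ℝ) :
    (∏ i, ∑ a, g i a) = ∑ f : Fin n → α, ∏ i, g i (f i) := by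
  classical
  rw [Finset.prod_univ_sum, Fintype.piFinset_univ]

lemma indicator_le_W_rpow {n : ℕ} (hn : 0 < n) {δ A W : ℝ} (hW0 : 0 ≤ W)
    {P : Prop} [Decidable P]
    (h : P → 0 < W ∧ |(-(1 / (n : ℝ)) * Real.logb 2 W) - A| ≤ δ) :
    (if P then (1:ℝ) else 0) ≤ W * (2:ℝ) ^ ((n:ℝ) * (A + δ)) := by
  split_ifs with hp
  · obtain ⟨hW, habs⟩ := h hp
    have hnpos : (0:ℝ) < n := Nat.cast_pos.mpr hn
    have h1 : -(1 / (n : ℝ)) * Real.logb 2 W - A ≤ δ := (abs_le.mp habs).2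
    have h3 : (n:ℝ) * (-(1 / (n:ℝ)) * Real.logb 2 W) ≤ (n:ℝ) * (A + δ) :=
      mul_le_mul_of_nonneg_left (by linarith) hnpos.le
    have h4 : (n:ℝ) * (-(1 / (n:ℝ)) * Real.logb 2 W) = -Real.logb 2 W := by
      field_simp
    have hWeq : (2:ℝ) ^ Real.logb 2 W = W :=
      Real.rpow_logb (by norm_num) (by norm_num) hW
    calc (1:ℝ) = (2:ℝ) ^ (0:ℝ) := by norm_num
      _ ≤ (2:ℝ) ^ (Real.logb 2 W + (n:ℝ)*(A+δ)) := by
          apply Real.rpow_le_rpow_of_exponent_le one_le_two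
          linarith
      _ = W * (2:ℝ)^((n:ℝ)*(A+δ)) := by rw [Real.rpow_add (by norm_num : (0:ℝ)<2), hWeq]
  · positivity

lemma W_mul_indicator_le_rpow {n : ℕ} (hn : 0 < n) {δ B W : ℝ}
    {P : Prop} [Decidable P]
    (h : P → 0 < W ∧ |(-(1 / (n : ℝ)) * Real.logb 2 W) - B| ≤ δ) :
    W * (if P then (1:ℝ) else 0) ≤ (2:ℝ) ^ (-(n:ℝ) * (B - δ)) := by
  split_ifs with hp
  · obtain ⟨hW, habs⟩ := h hp
    have hnpos : (0:ℝ) < n := Nat.cast_pos.mpr hn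
    have h1 : -δ ≤ -(1 / (n : ℝ)) * Real.logb 2 W - B := (abs_le.mp habs).1
    have h3 : (n:ℝ) * (B - δ) ≤ (n:ℝ) * (-(1/(n:ℝ)) * Real.logb 2 W) :=
      mul_le_mul_of_nonneg_left (by linarith) hnpos.le
    have h4 : (n:ℝ) * (-(1 / (n:ℝ)) * Real.logb 2 W) = -Real.logb 2 W := by
      field_simp
    have hWeq : (2:ℝ) ^ Real.logb 2 W = W :=
      Real.rpow_logb (by norm_num) (by norm_num) hW
    rw [mul_one, ← hWeq]
    exact Real.rpow_le_rpow_of_exponent_le one_le_two (by linarith)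
  · rw [mul_zero]; positivity

open scoped Classical in
/-- Classical conditional packing lemma (core expectation bound). -/
theorem classical_conditional_packing
    (pU : U → ℝ) (hpU : ∀ u, 0 ≤ pU u) (hpUsum : ∑ u, pU u = 1)
    (pXU : U → X → ℝ) (hpXU : ∀ u x, 0 ≤ pXU u x) (hpXUsum : ∀ u, ∑ x, pXU u x = 1)
    (w : X → U → Y → ℝ) (hw : ∀ x u y, 0 ≤ w x u y) (hwsum : ∀ x u, ∑ y, w x u y = 1)
    (n : ℕ) (δ : ℝ) (hδ : 0 < δ) :
    ∑ uₙ : Fin n → U, ∑ xₙ : Fin n → X, ∑ xₙ' : Fin n → X, ∑ yₙ : Fin n → Y,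
      (∏ i, pU (uₙ i)) * (∏ i, pXU (uₙ i) (xₙ i)) * (∏ i, pXU (uₙ i) (xₙ' i)) *
        (∏ i, w (xₙ' i) (uₙ i) (yₙ i)) *
        (if CondTypicalXU pU pXU w n δ xₙ uₙ yₙ then 1 else 0) *
        (if CondTypicalU pU pXU w n δ uₙ yₙ then 1 else 0) ≤
      (2 : ℝ) ^ (-(n : ℝ) * ((HYU pU pXU w - HYXU pU pXU w) - 2 * δ)) := by
  rcases Nat.eq_zero_or_pos n with hn | hn
  · subst hn
    simp only [Nat.cast_zero, neg_zero, zero_mul, Real.rpow_zero, Fin.prod_univ_zero,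
      one_mul, Fintype.sum_unique]
    split_ifs <;> norm_num
  -- abbreviations
  set A := HYXU pU pXU w with hA
  set B := HYU pU pXU w with hB
  set c1 : ℝ := (n:ℝ) * (A + δ) with hc1
  set c2 : ℝ := -(n:ℝ) * (B - δ) with hc2
  have hwbarnn : ∀ u y, 0 ≤ wbar pXU w u y := fun u y =>
    Finset.sum_nonneg fun x _ => mul_nonneg (hpXU u x) (hw x u y)
  have hwbarsum : ∀ (uₙ : Fin n → U) (yₙ : Fin n → Y),
      ∑ xₙ' : Fin n → X, (∏ i, pXU (uₙ i) (xₙ' i)) * (∏ i, w (xₙ' i) (uₙ i) (yₙ i))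
        = ∏ i, wbar pXU w (uₙ i) (yₙ i) := by
    intro uₙ yₙ
    simp_rw [← Finset.prod_mul_distrib]
    simp only [wbar]
    rw [prod_sum_eq]
  have hyS : ∀ (uₙ : Fin n → U) (xₙ : Fin n → X),
      ∑ yₙ : Fin n → Y, ∏ i, w (xₙ i) (uₙ i) (yₙ i) = 1 := by
    intro uₙ xₙ
    rw [← prod_sum_eq]
    simp [hwsum]
  have hxS : ∀ (uₙ : Fin n → U),
      ∑ xₙ : Fin n → X, ∏ i, pXU (uₙ i) (xₙ i) = 1 := by
    intro uₙ
    rw [← prod_sum_eq]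
    simp [hpXUsum]
  have huS : ∑ uₙ : Fin n → U, ∏ i, pU (uₙ i) = 1 := by
    rw [← prod_sum_eq]
    simp [hpUsum]
  calc
    ∑ uₙ : Fin n → U, ∑ xₙ : Fin n → X, ∑ xₙ' : Fin n → X, ∑ yₙ : Fin n → Y,
      (∏ i, pU (uₙ i)) * (∏ i, pXU (uₙ i) (xₙ i)) * (∏ i, pXU (uₙ i) (xₙ' i)) *
        (∏ i, w (xₙ' i) (uₙ i) (yₙ i)) *
        (if CondTypicalXU pU pXU w n δ xₙ uₙ yₙ then 1 else 0) *
        (if CondTypicalU pU pXU w n δ uₙ yₙ then 1 else 0)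
      ≤ ∑ uₙ : Fin n → U, ∑ xₙ : Fin n → X, ∑ xₙ' : Fin n → X, ∑ yₙ : Fin n → Y,
        ((∏ i, pU (uₙ i)) * (∏ i, pXU (uₙ i) (xₙ i)) * (∏ i, pXU (uₙ i) (xₙ' i)) *
          (∏ i, w (xₙ' i) (uₙ i) (yₙ i)) *
          (if CondTypicalU pU pXU w n δ uₙ yₙ then 1 else 0)) *
          ((∏ i, w (xₙ i) (uₙ i) (yₙ i)) * (2:ℝ) ^ c1) := by
      refine Finset.sum_le_sum fun uₙ _ => Finset.sum_le_sum fun xₙ _ =>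
        Finset.sum_le_sum fun xₙ' _ => Finset.sum_le_sum fun yₙ _ => ?_
      have hχ : (if CondTypicalXU pU pXU w n δ xₙ uₙ yₙ then (1:ℝ) else 0)
          ≤ (∏ i, w (xₙ i) (uₙ i) (yₙ i)) * (2:ℝ) ^ c1 :=
        indicator_le_W_rpow hn (Finset.prod_nonneg fun i _ => hw _ _ _) (fun h => h)
      have hχ2 : (0:ℝ) ≤ if CondTypicalU pU pXU w n δ uₙ yₙ then 1 else 0 := by
        split_ifs <;> norm_num
      have hnn : 0 ≤ (∏ i, pU (uₙ i)) * (∏ i, pXU (uₙ i) (xₙ i)) *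
          (∏ i, pXU (uₙ i) (xₙ' i)) * (∏ i, w (xₙ' i) (uₙ i) (yₙ i)) *
          (if CondTypicalU pU pXU w n δ uₙ yₙ then 1 else 0) :=
        mul_nonneg (mul_nonneg (mul_nonneg (mul_nonneg
          (Finset.prod_nonneg fun i _ => hpU _)
          (Finset.prod_nonneg fun i _ => hpXU _ _))
          (Finset.prod_nonneg fun i _ => hpXU _ _))
          (Finset.prod_nonneg fun i _ => hw _ _ _)) hχ2
      calc (∏ i, pU (uₙ i)) * (∏ i, pXU (uₙ i) (xₙ i)) * (∏ i, pXU (uₙ i) (xₙ' i)) *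
            (∏ i, w (xₙ' i) (uₙ i) (yₙ i)) *
            (if CondTypicalXU pU pXU w n δ xₙ uₙ yₙ then 1 else 0) *
            (if CondTypicalU pU pXU w n δ uₙ yₙ then 1 else 0)
          = ((∏ i, pU (uₙ i)) * (∏ i, pXU (uₙ i) (xₙ i)) * (∏ i, pXU (uₙ i) (xₙ' i)) *
            (∏ i, w (xₙ' i) (uₙ i) (yₙ i)) *
            (if CondTypicalU pU pXU w n δ uₙ yₙ then 1 else 0)) *
            (if CondTypicalXU pU pXU w n δ xₙ uₙ yₙ then 1 else 0) := by ring
        _ ≤ _ := mul_le_mul_of_nonneg_left hχ hnn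
    _ = (2:ℝ) ^ c1 * ∑ uₙ : Fin n → U, ∑ xₙ : Fin n → X, ∑ yₙ : Fin n → Y,
        ((∏ i, pU (uₙ i)) * (∏ i, pXU (uₙ i) (xₙ i)) * (∏ i, w (xₙ i) (uₙ i) (yₙ i))) *
          ((∏ i, wbar pXU w (uₙ i) (yₙ i)) *
            (if CondTypicalU pU pXU w n δ uₙ yₙ then 1 else 0)) := by
      rw [Finset.mul_sum]
      refine Finset.sum_congr rfl fun uₙ _ => ?_
      rw [Finset.mul_sum]
      refine Finset.sum_congr rfl fun xₙ _ => ?_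
      rw [Finset.sum_comm, Finset.mul_sum]
      refine Finset.sum_congr rfl fun yₙ _ => ?_
      calc ∑ xₙ' : Fin n → X,
            ((∏ i, pU (uₙ i)) * (∏ i, pXU (uₙ i) (xₙ i)) * (∏ i, pXU (uₙ i) (xₙ' i)) *
              (∏ i, w (xₙ' i) (uₙ i) (yₙ i)) *
              (if CondTypicalU pU pXU w n δ uₙ yₙ then 1 else 0)) *
              ((∏ i, w (xₙ i) (uₙ i) (yₙ i)) * (2:ℝ) ^ c1)
          = ∑ xₙ' : Fin n → X,
            ((∏ i, pXU (uₙ i) (xₙ' i)) * (∏ i, w (xₙ' i) (uₙ i) (yₙ i))) *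
              ((∏ i, pU (uₙ i)) * (∏ i, pXU (uₙ i) (xₙ i)) *
                (if CondTypicalU pU pXU w n δ uₙ yₙ then 1 else 0) *
                ((∏ i, w (xₙ i) (uₙ i) (yₙ i)) * (2:ℝ) ^ c1)) :=
            Finset.sum_congr rfl fun xₙ' _ => by ring
        _ = (∑ xₙ' : Fin n → X,
              (∏ i, pXU (uₙ i) (xₙ' i)) * (∏ i, w (xₙ' i) (uₙ i) (yₙ i))) *
              ((∏ i, pU (uₙ i)) * (∏ i, pXU (uₙ i) (xₙ i)) *
                (if CondTypicalU pU pXU w n δ uₙ yₙ then 1 else 0) *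
                ((∏ i, w (xₙ i) (uₙ i) (yₙ i)) * (2:ℝ) ^ c1)) := by
            rw [Finset.sum_mul]
        _ = _ := by rw [hwbarsum uₙ yₙ]; ring
    _ ≤ (2:ℝ) ^ c1 * ∑ uₙ : Fin n → U, ∑ xₙ : Fin n → X, ∑ yₙ : Fin n → Y,
        ((∏ i, pU (uₙ i)) * (∏ i, pXU (uₙ i) (xₙ i)) * (∏ i, w (xₙ i) (uₙ i) (yₙ i))) *
          (2:ℝ) ^ c2 := by
      refine mul_le_mul_of_nonneg_left ?_ (Real.rpow_nonneg (by norm_num) _)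
      refine Finset.sum_le_sum fun uₙ _ => Finset.sum_le_sum fun xₙ _ =>
        Finset.sum_le_sum fun yₙ _ => ?_
      refine mul_le_mul_of_nonneg_left ?_ ?_
      · exact W_mul_indicator_le_rpow hn (fun h => h)
      · exact mul_nonneg (mul_nonneg (Finset.prod_nonneg fun i _ => hpU _)
          (Finset.prod_nonneg fun i _ => hpXU _ _)) (Finset.prod_nonneg fun i _ => hw _ _ _)
    _ = (2:ℝ) ^ c1 * ((2:ℝ) ^ c2 *
        ∑ uₙ : Fin n → U, ∑ xₙ : Fin n → X, ∑ yₙ : Fin n → Y,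
          (∏ i, pU (uₙ i)) * (∏ i, pXU (uₙ i) (xₙ i)) * (∏ i, w (xₙ i) (uₙ i) (yₙ i))) := by
      congr 1
      rw [Finset.mul_sum]
      refine Finset.sum_congr rfl fun uₙ _ => ?_
      rw [Finset.mul_sum]
      refine Finset.sum_congr rfl fun xₙ _ => ?_
      rw [Finset.mul_sum]
      exact Finset.sum_congr rfl fun yₙ _ => by ring
    _ = (2:ℝ) ^ c1 * (2:ℝ) ^ c2 := by
      have htot : ∑ uₙ : Fin n → U, ∑ xₙ : Fin n → X, ∑ yₙ : Fin n → Y,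
          (∏ i, pU (uₙ i)) * (∏ i, pXU (uₙ i) (xₙ i)) * (∏ i, w (xₙ i) (uₙ i) (yₙ i)) = 1 := by
        have h1 : ∀ uₙ : Fin n → U,
            (∑ xₙ : Fin n → X, ∑ yₙ : Fin n → Y,
              (∏ i, pU (uₙ i)) * (∏ i, pXU (uₙ i) (xₙ i)) * (∏ i, w (xₙ i) (uₙ i) (yₙ i)))
            = ∏ i, pU (uₙ i) := by
          intro uₙ
          have h2 : ∀ xₙ : Fin n → X,
              (∑ yₙ : Fin n → Y,
                (∏ i, pU (uₙ i)) * (∏ i, pXU (uₙ i) (xₙ i)) * (∏ i, w (xₙ i) (uₙ i) (yₙ i)))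
              = (∏ i, pU (uₙ i)) * (∏ i, pXU (uₙ i) (xₙ i)) := by
            intro xₙ
            rw [← Finset.mul_sum, hyS uₙ xₙ, mul_one]
          rw [Finset.sum_congr rfl fun xₙ _ => h2 xₙ, ← Finset.mul_sum, hxS uₙ, mul_one]
        rw [Finset.sum_congr rfl fun uₙ _ => h1 uₙ, huS]
      rw [htot, mul_one]
    _ = (2 : ℝ) ^ (-(n : ℝ) * ((B - A) - 2 * δ)) := by
      rw [← Real.rpow_add (by norm_num : (0:ℝ) < 2)]
      congr 1
      rw [hc1, hc2]
      ring
end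
end

section
/- Classical conditional packing lemma (random codebook form): With the setup of the classical conditional packing lemma, fix M ∈ ℕ, a message index m ∈ {1,…,M}, n ∈ ℕ and δ > 0. Consider the random experiment in which Uⁿ is drawn with probability ∏ᵢ p_U(uᵢ), the codewords Xⁿ(1),…,Xⁿ(M) ∈ 𝒳ⁿ are drawn conditionally independently with probabilities ∏ᵢ p_{X|U}(·|Uᵢ), and Yⁿ is drawn with probability ∏ᵢ w(·|Xⁿ(m)ᵢ, Uᵢ). Then the probability (a finite sum of products of the above weights times an indicator) that there exists m′ ≠ m with Yⁿ ∈ T^n_δ(Y|Xⁿ(m′),Uⁿ) and Yⁿ ∈ T^n_δ(Y|Uⁿ) is at most M · 2^{−n(I(X;Y|U) − 2δ)}. -/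
open scoped BigOperators

section
variable {U X Y : Type*} [Fintype U] [Fintype X] [Fintype Y]

private lemma sum_prod_fun {ι : Type*} [Fintype ι] [DecidableEq ι] {α : Type*} [Fintype α]
    (f : ι → α → ℝ) : ∑ c : ι → α, ∏ i, f i (c i) = ∏ i, ∑ x, f i x := by
  rw [Finset.prod_univ_sum]; simp [Fintype.piFinset_univ]

private lemma typ_bounds {n : ℕ} {P H δ : ℝ} (hP : 0 < P) (h0 : n = 0 → P = 1)
    (h : |(-(1 / (n : ℝ)) * Real.logb 2 P) - H| ≤ δ) :
    (2:ℝ) ^ (-(n:ℝ) * (H + δ)) ≤ P ∧ P ≤ (2:ℝ) ^ (-(n:ℝ) * (H - δ)) := by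
  rcases Nat.eq_zero_or_pos n with hn | hn
  · subst hn; simp [h0 rfl]
  · have hn' : (0:ℝ) < n := by exact_mod_cast hn
    obtain ⟨h1, h2⟩ := abs_le.mp h
    set L := Real.logb 2 P with hL
    have e : -(1/(n:ℝ)) * L = -L / n := by ring
    rw [e] at h1 h2
    have h2' : -L ≤ (H + δ) * n := (div_le_iff₀ hn').mp (by linarith)
    have h1' : (H - δ) * n ≤ -L := (le_div_iff₀ hn').mp (by linarith)
    have hlo : -(n:ℝ) * (H + δ) ≤ L := by nlinarith
    have hhi : L ≤ -(n:ℝ) * (H - δ) := by nlinarith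
    have hPe : P = (2:ℝ) ^ L := (Real.rpow_logb (by norm_num) (by norm_num) hP).symm
    exact ⟨hPe ▸ Real.rpow_le_rpow_of_exponent_le one_le_two hlo,
           hPe ▸ Real.rpow_le_rpow_of_exponent_le one_le_two hhi⟩

set_option maxHeartbeats 2000000 in
open scoped Classical in
/-- Classical conditional packing lemma (random codebook form): the probability that the
channel output for codeword `m` lands in the conditionally typical set of some other codeword
(also being typical with respect to the averaged channel) is at most
`M · 2^{−n(I(X;Y|U) − 2δ)}`. -/
theorem classical_conditional_packing_codebook
    (pU : U → ℝ) (hpU : ∀ u, 0 ≤ pU u) (hpUsum : ∑ u, pU u = 1)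
    (pXU : U → X → ℝ) (hpXU : ∀ u x, 0 ≤ pXU u x) (hpXUsum : ∀ u, ∑ x, pXU u x = 1)
    (w : X → U → Y → ℝ) (hw : ∀ x u y, 0 ≤ w x u y) (hwsum : ∀ x u, ∑ y, w x u y = 1)
    (M : ℕ) (m : Fin M) (n : ℕ) (δ : ℝ) (hδ : 0 < δ) :
    ∑ uₙ : Fin n → U, ∑ C : Fin M → Fin n → X, ∑ yₙ : Fin n → Y,
      (∏ i, pU (uₙ i)) * (∏ m' : Fin M, ∏ i, pXU (uₙ i) (C m' i)) *
        (∏ i, w (C m i) (uₙ i) (yₙ i)) *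
        (if ∃ m' : Fin M, m' ≠ m ∧ CondTypicalXU pU pXU w n δ (C m') uₙ yₙ ∧
            CondTypicalU pU pXU w n δ uₙ yₙ then 1 else 0) ≤
      (M : ℝ) * (2 : ℝ) ^ (-(n : ℝ) * ((HYU pU pXU w - HYXU pU pXU w) - 2 * δ)) := by
  classical
  set HX := HYXU pU pXU w with hHXdef
  set HU := HYU pU pXU w with hHUdef
  set B : ℝ := (2 : ℝ) ^ (-(n : ℝ) * ((HU - HX) - 2 * δ)) with hBdef
  set K1 : ℝ := (2 : ℝ) ^ ((n : ℝ) * (HX + δ)) with hK1def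
  set K2 : ℝ := (2 : ℝ) ^ (-(n : ℝ) * (HU - δ)) with hK2def
  have hBpos : 0 < B := Real.rpow_pos_of_pos two_pos _
  have hK1pos : 0 < K1 := Real.rpow_pos_of_pos two_pos _
  have hK2pos : 0 < K2 := Real.rpow_pos_of_pos two_pos _
  have hwbar : ∀ u y, 0 ≤ wbar pXU w u y := fun u y =>
    Finset.sum_nonneg fun x _ => mul_nonneg (hpXU u x) (hw x u y)
  have hwbarsum : ∀ u, ∑ y, wbar pXU w u y = 1 := by
    intro u
    unfold wbar
    rw [Finset.sum_comm]
    simp_rw [← Finset.mul_sum, hwsum, mul_one]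
    exact hpXUsum u
  -- nonnegativity of the various products
  have hPu : ∀ uₙ : Fin n → U, 0 ≤ ∏ i, pU (uₙ i) :=
    fun uₙ => Finset.prod_nonneg fun i _ => hpU _
  have hQ : ∀ (uₙ : Fin n → U) (C : Fin M → Fin n → X),
      0 ≤ ∏ k, ∏ i, pXU (uₙ i) (C k i) :=
    fun uₙ C => Finset.prod_nonneg fun k _ => Finset.prod_nonneg fun i _ => hpXU _ _
  have hwn : ∀ (xₙ : Fin n → X) (uₙ : Fin n → U) (yₙ : Fin n → Y),
      0 ≤ ∏ i, w (xₙ i) (uₙ i) (yₙ i) :=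
    fun xₙ uₙ yₙ => Finset.prod_nonneg fun i _ => hw _ _ _
  have hWn : ∀ (uₙ : Fin n → U) (yₙ : Fin n → Y),
      0 ≤ ∏ i, wbar pXU w (uₙ i) (yₙ i) :=
    fun uₙ yₙ => Finset.prod_nonneg fun i _ => hwbar _ _
  -- sums of product weights equal 1
  have hPusum : ∑ uₙ : Fin n → U, ∏ i, pU (uₙ i) = 1 := by
    rw [sum_prod_fun]; simp [hpUsum]
  have hWsum : ∀ uₙ : Fin n → U, ∑ yₙ : Fin n → Y, ∏ i, wbar pXU w (uₙ i) (yₙ i) = 1 := by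
    intro uₙ; rw [sum_prod_fun]; simp [hwbarsum]
  -- key bound for each fixed m'
  have key : ∀ m' : Fin M,
      ∑ uₙ : Fin n → U, ∑ C : Fin M → Fin n → X, ∑ yₙ : Fin n → Y,
        (∏ i, pU (uₙ i)) * (∏ k : Fin M, ∏ i, pXU (uₙ i) (C k i)) *
          (∏ i, w (C m i) (uₙ i) (yₙ i)) *
          (if m' ≠ m ∧ CondTypicalXU pU pXU w n δ (C m') uₙ yₙ ∧
              CondTypicalU pU pXU w n δ uₙ yₙ then 1 else 0) ≤ B := by
    intro m'
    rcases eq_or_ne m' m with rfl | hm'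
    · simp only [ne_eq, not_true_eq_false, false_and, if_false, mul_zero,
        Finset.sum_const_zero]
      exact hBpos.le
    -- m' ≠ m : the main estimate
    · -- pointwise bound on the summand
      have point : ∀ (uₙ : Fin n → U) (C : Fin M → Fin n → X) (yₙ : Fin n → Y),
          (∏ i, pU (uₙ i)) * (∏ k : Fin M, ∏ i, pXU (uₙ i) (C k i)) *
            (∏ i, w (C m i) (uₙ i) (yₙ i)) *
            (if m' ≠ m ∧ CondTypicalXU pU pXU w n δ (C m') uₙ yₙ ∧
                CondTypicalU pU pXU w n δ uₙ yₙ then 1 else 0) ≤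
          K1 * ((∏ i, pU (uₙ i)) * (∏ k : Fin M, ∏ i, pXU (uₙ i) (C k i)) *
            (∏ i, w (C m i) (uₙ i) (yₙ i)) * (∏ i, w (C m' i) (uₙ i) (yₙ i)) *
            (if CondTypicalU pU pXU w n δ uₙ yₙ then 1 else 0)) := by
        intro uₙ C yₙ
        set A : ℝ := (∏ i, pU (uₙ i)) * (∏ k : Fin M, ∏ i, pXU (uₙ i) (C k i)) *
          (∏ i, w (C m i) (uₙ i) (yₙ i)) with hAdef
        have hA : 0 ≤ A := mul_nonneg (mul_nonneg (hPu uₙ) (hQ uₙ C)) (hwn _ _ _)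
        by_cases h : m' ≠ m ∧ CondTypicalXU pU pXU w n δ (C m') uₙ yₙ ∧
            CondTypicalU pU pXU w n δ uₙ yₙ
        · rw [if_pos h, if_pos h.2.2]
          obtain ⟨-, ⟨hpos, habs⟩, -⟩ := h
          have h0 : n = 0 → ∏ i, w (C m' i) (uₙ i) (yₙ i) = 1 := by
            intro hn; subst hn; exact Finset.prod_of_isEmpty _
          have hlb := (typ_bounds hpos h0 habs).1
          have hK : (1:ℝ) ≤ K1 * ∏ i, w (C m' i) (uₙ i) (yₙ i) := by
            calc (1:ℝ) = (2:ℝ) ^ ((n:ℝ) * (HX + δ) + (-(n:ℝ) * (HX + δ))) := by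
                  rw [neg_mul, add_neg_cancel, Real.rpow_zero]
              _ = K1 * (2:ℝ) ^ (-(n:ℝ) * (HX + δ)) := by
                  rw [hK1def]; exact Real.rpow_add two_pos _ _
              _ ≤ K1 * ∏ i, w (C m' i) (uₙ i) (yₙ i) :=
                  mul_le_mul_of_nonneg_left hlb hK1pos.le
          calc A * 1 = A := mul_one A
            _ ≤ A * (K1 * ∏ i, w (C m' i) (uₙ i) (yₙ i)) := le_mul_of_one_le_right hA hK
            _ = K1 * (A * (∏ i, w (C m' i) (uₙ i) (yₙ i)) * 1) := by ring
        · rw [if_neg h, mul_zero]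
          have hτ : (0:ℝ) ≤ (if CondTypicalU pU pXU w n δ uₙ yₙ then (1:ℝ) else 0) := by
            split <;> norm_num
          exact mul_nonneg hK1pos.le
            (mul_nonneg (mul_nonneg hA (hwn _ _ _)) hτ)
      -- sum over the codebook of the m- and m'-codeword weights
      have hC : ∀ (uₙ : Fin n → U) (yₙ : Fin n → Y),
          ∑ C : Fin M → Fin n → X,
            (∏ k : Fin M, ∏ i, pXU (uₙ i) (C k i)) * (∏ i, w (C m i) (uₙ i) (yₙ i)) *
              (∏ i, w (C m' i) (uₙ i) (yₙ i)) =
          (∏ i, wbar pXU w (uₙ i) (yₙ i)) * (∏ i, wbar pXU w (uₙ i) (yₙ i)) := by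
        intro uₙ yₙ
        set g : Fin M → (Fin n → X) → ℝ := fun k x =>
          (∏ i, pXU (uₙ i) (x i)) *
            ((if k = m then ∏ i, w (x i) (uₙ i) (yₙ i) else 1) *
             (if k = m' then ∏ i, w (x i) (uₙ i) (yₙ i) else 1)) with hg
        have hstep : ∀ C : Fin M → Fin n → X,
            (∏ k : Fin M, ∏ i, pXU (uₙ i) (C k i)) * (∏ i, w (C m i) (uₙ i) (yₙ i)) *
              (∏ i, w (C m' i) (uₙ i) (yₙ i)) = ∏ k, g k (C k) := by
          intro C
          simp only [hg, Finset.prod_mul_distrib, Finset.prod_ite_eq']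
          simp [mul_assoc]
        have hXW : ∑ x : Fin n → X,
            (∏ i, pXU (uₙ i) (x i)) * (∏ i, w (x i) (uₙ i) (yₙ i)) =
            ∏ i, wbar pXU w (uₙ i) (yₙ i) := by
          calc ∑ x : Fin n → X, (∏ i, pXU (uₙ i) (x i)) * ∏ i, w (x i) (uₙ i) (yₙ i)
              = ∑ x : Fin n → X, ∏ i, (pXU (uₙ i) (x i) * w (x i) (uₙ i) (yₙ i)) := by
                simp [Finset.prod_mul_distrib]
            _ = ∏ i, ∑ x, pXU (uₙ i) x * w x (uₙ i) (yₙ i) :=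
                sum_prod_fun (fun i x => pXU (uₙ i) x * w x (uₙ i) (yₙ i))
            _ = ∏ i, wbar pXU w (uₙ i) (yₙ i) := rfl
        have hgsum : ∀ k, ∑ x : Fin n → X, g k x =
            (if k = m then ∏ i, wbar pXU w (uₙ i) (yₙ i) else 1) *
            (if k = m' then ∏ i, wbar pXU w (uₙ i) (yₙ i) else 1) := by
          intro k
          by_cases hk : k = m
          · have hk' : k ≠ m' := by rw [hk]; exact Ne.symm hm'
            rw [if_pos hk, if_neg hk', mul_one]
            calc ∑ x : Fin n → X, g k x
                = ∑ x : Fin n → X,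
                    (∏ i, pXU (uₙ i) (x i)) * (∏ i, w (x i) (uₙ i) (yₙ i)) := by
                  refine Finset.sum_congr rfl fun x _ => ?_
                  simp only [hg]
                  rw [if_pos hk, if_neg hk', mul_one]
              _ = ∏ i, wbar pXU w (uₙ i) (yₙ i) := hXW
          · by_cases hk' : k = m'
            · rw [if_neg hk, if_pos hk', one_mul]
              calc ∑ x : Fin n → X, g k x
                  = ∑ x : Fin n → X,
                      (∏ i, pXU (uₙ i) (x i)) * (∏ i, w (x i) (uₙ i) (yₙ i)) := by
                    refine Finset.sum_congr rfl fun x _ => ?_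
                    simp only [hg]
                    rw [if_neg hk, if_pos hk', one_mul]
                _ = ∏ i, wbar pXU w (uₙ i) (yₙ i) := hXW
            · rw [if_neg hk, if_neg hk', mul_one]
              calc ∑ x : Fin n → X, g k x
                  = ∑ x : Fin n → X, ∏ i, pXU (uₙ i) (x i) := by
                    refine Finset.sum_congr rfl fun x _ => ?_
                    simp only [hg]
                    rw [if_neg hk, if_neg hk', mul_one, mul_one]
                _ = 1 := by rw [sum_prod_fun]; simp [hpXUsum]
        calc ∑ C : Fin M → Fin n → X,
              (∏ k : Fin M, ∏ i, pXU (uₙ i) (C k i)) * (∏ i, w (C m i) (uₙ i) (yₙ i)) *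
                (∏ i, w (C m' i) (uₙ i) (yₙ i))
            = ∑ C : Fin M → Fin n → X, ∏ k, g k (C k) := Finset.sum_congr rfl fun C _ => hstep C
          _ = ∏ k, ∑ x : Fin n → X, g k x := sum_prod_fun _
          _ = ∏ k : Fin M, ((if k = m then ∏ i, wbar pXU w (uₙ i) (yₙ i) else 1) *
                (if k = m' then ∏ i, wbar pXU w (uₙ i) (yₙ i) else 1)) :=
              Finset.prod_congr rfl fun k _ => hgsum k
          _ = (∏ i, wbar pXU w (uₙ i) (yₙ i)) * (∏ i, wbar pXU w (uₙ i) (yₙ i)) := by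
              rw [Finset.prod_mul_distrib]
              simp [Finset.prod_ite_eq']
      -- put everything together
      calc ∑ uₙ : Fin n → U, ∑ C : Fin M → Fin n → X, ∑ yₙ : Fin n → Y,
            (∏ i, pU (uₙ i)) * (∏ k : Fin M, ∏ i, pXU (uₙ i) (C k i)) *
              (∏ i, w (C m i) (uₙ i) (yₙ i)) *
              (if m' ≠ m ∧ CondTypicalXU pU pXU w n δ (C m') uₙ yₙ ∧
                  CondTypicalU pU pXU w n δ uₙ yₙ then 1 else 0)
          ≤ ∑ uₙ : Fin n → U, ∑ C : Fin M → Fin n → X, ∑ yₙ : Fin n → Y,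
            K1 * ((∏ i, pU (uₙ i)) * (∏ k : Fin M, ∏ i, pXU (uₙ i) (C k i)) *
              (∏ i, w (C m i) (uₙ i) (yₙ i)) * (∏ i, w (C m' i) (uₙ i) (yₙ i)) *
              (if CondTypicalU pU pXU w n δ uₙ yₙ then 1 else 0)) := by
            refine Finset.sum_le_sum fun uₙ _ => Finset.sum_le_sum fun C _ =>
              Finset.sum_le_sum fun yₙ _ => point uₙ C yₙ
        _ = ∑ uₙ : Fin n → U, (∏ i, pU (uₙ i)) * ∑ yₙ : Fin n → Y,
              (K1 * (if CondTypicalU pU pXU w n δ uₙ yₙ then 1 else 0)) *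
              ∑ C : Fin M → Fin n → X,
                (∏ k : Fin M, ∏ i, pXU (uₙ i) (C k i)) * (∏ i, w (C m i) (uₙ i) (yₙ i)) *
                  (∏ i, w (C m' i) (uₙ i) (yₙ i)) := by
            refine Finset.sum_congr rfl fun uₙ _ => ?_
            rw [Finset.sum_comm, Finset.mul_sum]
            refine Finset.sum_congr rfl fun yₙ _ => ?_
            simp only [Finset.mul_sum]
            exact Finset.sum_congr rfl fun C _ => by ring
        _ = ∑ uₙ : Fin n → U, (∏ i, pU (uₙ i)) * ∑ yₙ : Fin n → Y,
              (K1 * (if CondTypicalU pU pXU w n δ uₙ yₙ then 1 else 0)) *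
              ((∏ i, wbar pXU w (uₙ i) (yₙ i)) * (∏ i, wbar pXU w (uₙ i) (yₙ i))) := by
            refine Finset.sum_congr rfl fun uₙ _ => ?_
            congr 1
            exact Finset.sum_congr rfl fun yₙ _ => by rw [hC uₙ yₙ]
        _ ≤ ∑ uₙ : Fin n → U, (∏ i, pU (uₙ i)) * ∑ yₙ : Fin n → Y,
              K1 * (K2 * (∏ i, wbar pXU w (uₙ i) (yₙ i))) := by
            refine Finset.sum_le_sum fun uₙ _ => mul_le_mul_of_nonneg_left
              (Finset.sum_le_sum fun yₙ _ => ?_) (hPu uₙ)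
            by_cases hU : CondTypicalU pU pXU w n δ uₙ yₙ
            · rw [if_pos hU]
              obtain ⟨hpos, habs⟩ := hU
              have h0 : n = 0 → ∏ i, wbar pXU w (uₙ i) (yₙ i) = 1 := by
                intro hn; subst hn; exact Finset.prod_of_isEmpty _
              have hub := (typ_bounds hpos h0 habs).2
              have := mul_le_mul_of_nonneg_right hub (hWn uₙ yₙ)
              calc K1 * 1 * ((∏ i, wbar pXU w (uₙ i) (yₙ i)) * (∏ i, wbar pXU w (uₙ i) (yₙ i)))
                  = K1 * ((∏ i, wbar pXU w (uₙ i) (yₙ i)) * (∏ i, wbar pXU w (uₙ i) (yₙ i))) := by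
                    ring
                _ ≤ K1 * (K2 * (∏ i, wbar pXU w (uₙ i) (yₙ i))) :=
                    mul_le_mul_of_nonneg_left this hK1pos.le
            · rw [if_neg hU]
              have : K1 * 0 * ((∏ i, wbar pXU w (uₙ i) (yₙ i)) * (∏ i, wbar pXU w (uₙ i) (yₙ i)))
                  = 0 := by ring
              rw [this]
              exact mul_nonneg hK1pos.le (mul_nonneg hK2pos.le (hWn uₙ yₙ))
        _ = K1 * K2 := by
            have : ∀ uₙ : Fin n → U, ∑ yₙ : Fin n → Y,
                K1 * (K2 * (∏ i, wbar pXU w (uₙ i) (yₙ i))) = K1 * K2 := by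
              intro uₙ
              rw [← Finset.mul_sum, ← Finset.mul_sum, hWsum uₙ, mul_one]
            simp_rw [this]
            rw [← Finset.sum_mul, hPusum, one_mul]
        _ = B := by
            rw [hK1def, hK2def, hBdef, ← Real.rpow_add two_pos]
            congr 1
            ring
  -- bound the indicator of the existential by a sum of indicators
  have hind : ∀ (uₙ : Fin n → U) (C : Fin M → Fin n → X) (yₙ : Fin n → Y),
      (if ∃ m' : Fin M, m' ≠ m ∧ CondTypicalXU pU pXU w n δ (C m') uₙ yₙ ∧
          CondTypicalU pU pXU w n δ uₙ yₙ then (1:ℝ) else 0) ≤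
      ∑ m' : Fin M, (if m' ≠ m ∧ CondTypicalXU pU pXU w n δ (C m') uₙ yₙ ∧
          CondTypicalU pU pXU w n δ uₙ yₙ then (1:ℝ) else 0) := by
    intro uₙ C yₙ
    by_cases h : ∃ m' : Fin M, m' ≠ m ∧ CondTypicalXU pU pXU w n δ (C m') uₙ yₙ ∧
        CondTypicalU pU pXU w n δ uₙ yₙ
    · rw [if_pos h]
      obtain ⟨m', hm'⟩ := h
      calc (1:ℝ) = (if m' ≠ m ∧ CondTypicalXU pU pXU w n δ (C m') uₙ yₙ ∧
            CondTypicalU pU pXU w n δ uₙ yₙ then (1:ℝ) else 0) := (if_pos hm').symm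
        _ ≤ _ := Finset.single_le_sum
            (f := fun k => if k ≠ m ∧ CondTypicalXU pU pXU w n δ (C k) uₙ yₙ ∧
              CondTypicalU pU pXU w n δ uₙ yₙ then (1:ℝ) else 0)
            (fun k _ => by split <;> norm_num) (Finset.mem_univ m')
    · rw [if_neg h]
      exact Finset.sum_nonneg fun k _ => by split <;> norm_num
  -- assemble
  calc ∑ uₙ : Fin n → U, ∑ C : Fin M → Fin n → X, ∑ yₙ : Fin n → Y,
        (∏ i, pU (uₙ i)) * (∏ m' : Fin M, ∏ i, pXU (uₙ i) (C m' i)) *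
          (∏ i, w (C m i) (uₙ i) (yₙ i)) *
          (if ∃ m' : Fin M, m' ≠ m ∧ CondTypicalXU pU pXU w n δ (C m') uₙ yₙ ∧
              CondTypicalU pU pXU w n δ uₙ yₙ then 1 else 0)
      ≤ ∑ uₙ : Fin n → U, ∑ C : Fin M → Fin n → X, ∑ yₙ : Fin n → Y,
        ∑ m' : Fin M, (∏ i, pU (uₙ i)) * (∏ k : Fin M, ∏ i, pXU (uₙ i) (C k i)) *
          (∏ i, w (C m i) (uₙ i) (yₙ i)) *
          (if m' ≠ m ∧ CondTypicalXU pU pXU w n δ (C m') uₙ yₙ ∧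
              CondTypicalU pU pXU w n δ uₙ yₙ then 1 else 0) := by
        refine Finset.sum_le_sum fun uₙ _ => Finset.sum_le_sum fun C _ =>
          Finset.sum_le_sum fun yₙ _ => ?_
        rw [← Finset.mul_sum]
        exact mul_le_mul_of_nonneg_left (hind uₙ C yₙ)
          (mul_nonneg (mul_nonneg (hPu uₙ) (hQ uₙ C)) (hwn _ _ _))
    _ = ∑ m' : Fin M, ∑ uₙ : Fin n → U, ∑ C : Fin M → Fin n → X, ∑ yₙ : Fin n → Y,
        (∏ i, pU (uₙ i)) * (∏ k : Fin M, ∏ i, pXU (uₙ i) (C k i)) *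
          (∏ i, w (C m i) (uₙ i) (yₙ i)) *
          (if m' ≠ m ∧ CondTypicalXU pU pXU w n δ (C m') uₙ yₙ ∧
              CondTypicalU pU pXU w n δ uₙ yₙ then 1 else 0) := by
        calc ∑ uₙ : Fin n → U, ∑ C : Fin M → Fin n → X, ∑ yₙ : Fin n → Y, ∑ m' : Fin M,
              (∏ i, pU (uₙ i)) * (∏ k : Fin M, ∏ i, pXU (uₙ i) (C k i)) *
                (∏ i, w (C m i) (uₙ i) (yₙ i)) *
                (if m' ≠ m ∧ CondTypicalXU pU pXU w n δ (C m') uₙ yₙ ∧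
                    CondTypicalU pU pXU w n δ uₙ yₙ then 1 else 0)
            = ∑ uₙ : Fin n → U, ∑ C : Fin M → Fin n → X, ∑ m' : Fin M, ∑ yₙ : Fin n → Y,
              (∏ i, pU (uₙ i)) * (∏ k : Fin M, ∏ i, pXU (uₙ i) (C k i)) *
                (∏ i, w (C m i) (uₙ i) (yₙ i)) *
                (if m' ≠ m ∧ CondTypicalXU pU pXU w n δ (C m') uₙ yₙ ∧
                    CondTypicalU pU pXU w n δ uₙ yₙ then 1 else 0) :=
              Finset.sum_congr rfl fun uₙ _ => Finset.sum_congr rfl fun C _ => Finset.sum_comm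
          _ = ∑ uₙ : Fin n → U, ∑ m' : Fin M, ∑ C : Fin M → Fin n → X, ∑ yₙ : Fin n → Y,
              (∏ i, pU (uₙ i)) * (∏ k : Fin M, ∏ i, pXU (uₙ i) (C k i)) *
                (∏ i, w (C m i) (uₙ i) (yₙ i)) *
                (if m' ≠ m ∧ CondTypicalXU pU pXU w n δ (C m') uₙ yₙ ∧
                    CondTypicalU pU pXU w n δ uₙ yₙ then 1 else 0) :=
              Finset.sum_congr rfl fun uₙ _ => Finset.sum_comm
          _ = _ := Finset.sum_comm
    _ ≤ ∑ _m' : Fin M, B := Finset.sum_le_sum fun m' _ => key m'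
    _ = (M : ℝ) * B := by
        rw [Finset.sum_const, Finset.card_univ, Fintype.card_fin, nsmul_eq_mul]

end
end

section
/- Core estimate of the quantum packing lemma: Let 𝒰 and 𝒳 be finite sets, p a probability distribution on 𝒰, q(·|u) a conditional probability distribution on 𝒳 for each u ∈ 𝒰, and (ρ_{u,x}) density matrices on ℂ^D, with averages ρ̄_u := ∑_x q(x|u) ρ_{u,x}. Let (Π̄_u)_{u∈𝒰} and (Π_{u,x})_{u∈𝒰,x∈𝒳} be orthogonal projections on ℂ^D, and let c ≥ 0 and C ≥ 0 be real numbers such that Π̄_u ρ̄_u Π̄_u ≤ c·Π̄_u for every u, and ∑_{u,x} p(u) q(x|u) Tr[Π_{u,x}] ≤ C. Then ∑_{u,x,x̃} p(u) q(x|u) q(x̃|u) Tr[ Π̄_u Π_{u,x} Π̄_u ρ_{u,x̃} ] ≤ c·C. (In the quantum packing lemma this is applied with ρ_{u,x} the n-fold tensor-power channel outputs, Π̄_u and Π_{u,x} the averaged and conditionally typical projectors, c = 2^{−n(H(B|U)−δ)} and C = 2^{n(H(B|U,X)+δ)}, yielding the bound 2^{−n(I(X;B|U)−2δ)}.) -/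
open scoped BigOperators ComplexOrder
open Matrix

lemma proj_psd' {D : ℕ} {A : Matrix (Fin D) (Fin D) ℂ} (h : A.IsHermitian)
    (h2 : A * A = A) : A.PosSemidef :=
  by have := posSemidef_conjTranspose_mul_self A; rwa [h.eq, h2] at this

lemma psd_trace_nonneg' {D : ℕ} {A : Matrix (Fin D) (Fin D) ℂ} (h : A.PosSemidef) :
    0 ≤ A.trace := by
  rw [Matrix.trace]
  apply Finset.sum_nonneg
  intro i _
  have := (posSemidef_iff_dotProduct_mulVec.mp h).2 (Pi.single i 1)
  simpa [dotProduct, Matrix.mulVec, Pi.single_apply, Matrix.diag] using this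

lemma trace_mul_psd_nonneg' {D : ℕ} {A B : Matrix (Fin D) (Fin D) ℂ}
    (hA : A.PosSemidef) (hB : B.PosSemidef) : 0 ≤ (A * B).trace := by
  open scoped MatrixOrder in obtain ⟨M, rfl⟩ := CStarAlgebra.nonneg_iff_eq_star_mul_self.mp hA.nonneg
  rw [Matrix.mul_assoc, Matrix.trace_mul_comm]
  exact psd_trace_nonneg' (by simpa [star_eq_conjTranspose] using hB.mul_mul_conjTranspose_same M)

/-- Core estimate of the quantum packing lemma: if `Π̄ᵤ ρ̄ᵤ Π̄ᵤ ≤ c·Π̄ᵤ` for every `u` and the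
expected rank `∑ p(u)q(x|u) Tr[Π_{u,x}]` is at most `C`, then the expected overlap
`∑ p(u)q(x|u)q(x̃|u) Tr[Π̄ᵤ Π_{u,x} Π̄ᵤ ρ_{u,x̃}]` is at most `c·C`. -/
theorem quantum_packing_core {U X : Type*} [Fintype U] [Fintype X] {D : ℕ}
    (p : U → ℝ) (hp : ∀ u, 0 ≤ p u) (hpsum : ∑ u, p u = 1)
    (q : U → X → ℝ) (hq : ∀ u x, 0 ≤ q u x) (hqsum : ∀ u, ∑ x, q u x = 1)
    (ρ : U → X → Matrix (Fin D) (Fin D) ℂ)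
    (hρ : ∀ u x, (ρ u x).PosSemidef ∧ (ρ u x).trace = 1)
    (Pb : U → Matrix (Fin D) (Fin D) ℂ)
    (hPb : ∀ u, (Pb u).IsHermitian ∧ Pb u * Pb u = Pb u)
    (Pux : U → X → Matrix (Fin D) (Fin D) ℂ)
    (hPux : ∀ u x, (Pux u x).IsHermitian ∧ Pux u x * Pux u x = Pux u x)
    (c C : ℝ) (hc : 0 ≤ c) (hC : 0 ≤ C)
    (h1 : ∀ u, (c • Pb u - Pb u * (∑ x, (q u x : ℂ) • ρ u x) * Pb u).PosSemidef)
    (h2 : ∑ u, ∑ x, p u * q u x * (Pux u x).trace.re ≤ C) :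
    ∑ u, ∑ x, ∑ x', p u * q u x * q u x' *
        (Pb u * Pux u x * Pb u * ρ u x').trace.re ≤ c * C := by
  -- key pointwise estimate
  have key : ∀ u x, ∑ x', q u x' * (Pb u * Pux u x * Pb u * ρ u x').trace.re
      ≤ c * (Pux u x).trace.re := by
    intro u x
    set ρb : Matrix (Fin D) (Fin D) ℂ := ∑ x', (q u x' : ℂ) • ρ u x' with hρb
    have hPbpsd : (Pb u).PosSemidef := proj_psd' (hPb u).1 (hPb u).2
    have hPuxpsd : (Pux u x).PosSemidef := proj_psd' (hPux u x).1 (hPux u x).2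
    have h1mb : (1 - Pb u).PosSemidef := by
      refine proj_psd' (Matrix.isHermitian_one.sub (hPb u).1) ?_
      rw [mul_sub, sub_mul, sub_mul, mul_one, one_mul, mul_one, (hPb u).2]
      abel
    -- step 1: the x'-sum equals the trace against ρb
    have hsum : ∑ x', q u x' * (Pb u * Pux u x * Pb u * ρ u x').trace.re
        = (Pb u * Pux u x * Pb u * ρb).trace.re := by
      have : Pb u * Pux u x * Pb u * ρb
          = ∑ x', (q u x' : ℂ) • (Pb u * Pux u x * Pb u * ρ u x') := by
        rw [hρb, Finset.mul_sum]
        exact Finset.sum_congr rfl fun x' _ => by rw [Matrix.mul_smul]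
      rw [this, Matrix.trace_sum, Complex.re_sum]
      exact Finset.sum_congr rfl fun x' _ => by
        rw [Matrix.trace_smul]
        simp [Complex.smul_re]
    -- cyclicity
    have cyc : (Pb u * Pux u x * Pb u * ρb).trace
        = (Pux u x * (Pb u * ρb * Pb u)).trace := by
      rw [show Pb u * Pux u x * Pb u * ρb = Pb u * (Pux u x * (Pb u * ρb)) by
        noncomm_ring]
      rw [Matrix.trace_mul_comm]
      congr 1
      noncomm_ring
    -- inequality 1: trace(Pux (Pb ρb Pb)) ≤ c * trace(Pux Pb)
    have k1 : 0 ≤ (Pux u x * (c • Pb u - Pb u * ρb * Pb u)).trace :=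
      trace_mul_psd_nonneg' hPuxpsd (h1 u)
    have k1' : (Pux u x * (Pb u * ρb * Pb u)).trace.re
        ≤ c * (Pux u x * Pb u).trace.re := by
      rw [mul_sub, Matrix.trace_sub, mul_smul_comm, Matrix.trace_smul] at k1
      have := (Complex.le_def.mp k1).1
      simp only [Complex.zero_re, Complex.sub_re, Complex.smul_re, smul_eq_mul] at this
      linarith [this]
    -- inequality 2: trace(Pux Pb) ≤ trace(Pux)
    have k2 : 0 ≤ (Pux u x * (1 - Pb u)).trace :=
      trace_mul_psd_nonneg' hPuxpsd h1mb
    have k2' : (Pux u x * Pb u).trace.re ≤ (Pux u x).trace.re := by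
      rw [mul_sub, Matrix.trace_sub, mul_one] at k2
      have := (Complex.le_def.mp k2).1
      simp only [Complex.zero_re, Complex.sub_re] at this
      linarith [this]
    rw [hsum, cyc]
    calc (Pux u x * (Pb u * ρb * Pb u)).trace.re
        ≤ c * (Pux u x * Pb u).trace.re := k1'
      _ ≤ c * (Pux u x).trace.re := by
          exact mul_le_mul_of_nonneg_left k2' hc
  -- assemble
  calc ∑ u, ∑ x, ∑ x', p u * q u x * q u x' *
          (Pb u * Pux u x * Pb u * ρ u x').trace.re
      = ∑ u, ∑ x, p u * q u x *
          ∑ x', q u x' * (Pb u * Pux u x * Pb u * ρ u x').trace.re := by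
        refine Finset.sum_congr rfl fun u _ => Finset.sum_congr rfl fun x _ => ?_
        rw [Finset.mul_sum]
        exact Finset.sum_congr rfl fun x' _ => by ring
    _ ≤ ∑ u, ∑ x, p u * q u x * (c * (Pux u x).trace.re) := by
        refine Finset.sum_le_sum fun u _ => Finset.sum_le_sum fun x _ => ?_
        exact mul_le_mul_of_nonneg_left (key u x) (mul_nonneg (hp u) (hq u x))
    _ = c * ∑ u, ∑ x, p u * q u x * (Pux u x).trace.re := by
        rw [Finset.mul_sum]
        refine Finset.sum_congr rfl fun u _ => ?_
        rw [Finset.mul_sum]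
        exact Finset.sum_congr rfl fun x _ => by ring
    _ ≤ c * C := mul_le_mul_of_nonneg_left h2 hc
end
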